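/- Let N = (S, C, R) be a deficiency-one chemical reaction network having at least one nonterminal complex, with t terminal strong linkage classes. Let κ ∈ ℝ^R_{>0} be such that Σ_{y→y' ∈ R} κ_{y→y'} (y' − y) = 0 (equivalently, the all-ones vector 1^C lies in Ker(Y ∘ A_κ)). If b^1, ..., b^t is a basis of Ker A_κ with supp(b^i) equal to the i-th terminal strong linkage class, then {1^C, b^1, ..., b^t} is a basis of Ker(Y ∘ A_κ); in particular, dim Ker(Y ∘ A_κ) = 1 + t. -/

import Mathlib

open scoped BigOperators Classical

/-- A chemical reaction network (CRN) on a finite species set `S`: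
complexes are non-negative vectors in `ℝ^S`, reactions are pairs of complexes,
no reaction is a self-loop, and every complex occurs in some reaction. -/
structure CRN (S : Type*) [Fintype S] where
  complexes : Finset (S → ℝ)
  reactions : Finset ((S → ℝ) × (S → ℝ))
  complexes_nonneg : ∀ y ∈ complexes, ∀ i, 0 ≤ y i
  mem_source : ∀ r ∈ reactions, r.1 ∈ complexes
  mem_target : ∀ r ∈ reactions, r.2 ∈ complexes
  ne_of_mem : ∀ r ∈ reactions, r.1 ≠ r.2
  cover : ∀ y ∈ complexes, ∃ y', (y, y') ∈ reactions ∨ (y', y) ∈ reactions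

namespace CRN

variable {S : Type*} [Fintype S] (N : CRN S)

/-- One-step reaction relation on complexes. -/
def step (y y' : S → ℝ) : Prop := (y, y') ∈ N.reactions

/-- Reachability along directed reactions. -/
def reach : (S → ℝ) → (S → ℝ) → Prop := Relation.ReflTransGen N.step

/-- A complex is terminal iff it belongs to a terminal strong linkage class,
i.e. everything reachable from it can reach it back. -/
def IsTerminal (y : S → ℝ) : Prop :=
  y ∈ N.complexes ∧ ∀ y', N.reach y y' → N.reach y' y

/-- A nonterminal complex. -/
def Nonterminal (y : S → ℝ) : Prop := y ∈ N.complexes ∧ ¬ N.IsTerminal y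

/-- The set of terminal strong linkage classes. -/
def tslc : Set (Set (S → ℝ)) :=
  {L | ∃ y, N.IsTerminal y ∧ L = {y' | N.reach y y' ∧ N.reach y' y}}

/-- The number `t` of terminal strong linkage classes. -/
noncomputable def numTSLC : ℕ := Nat.card N.tslc

/-- Undirected connectivity (for linkage classes). -/
def linked : (S → ℝ) → (S → ℝ) → Prop :=
  Relation.ReflTransGen (fun a b => (a, b) ∈ N.reactions ∨ (b, a) ∈ N.reactions)

/-- The set of linkage classes (connected components of the reaction digraph). -/
def linkageClasses : Set (Set (S → ℝ)) :=
  {L | ∃ y ∈ N.complexes, L = {y' | y' ∈ N.complexes ∧ N.linked y y'}}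

/-- The number `ℓ` of linkage classes. -/
noncomputable def numLinkageClasses : ℕ := Nat.card N.linkageClasses

/-- The stoichiometric subspace `S = span{y' - y : y → y'}`. -/
def stoichSubspace : Submodule ℝ (S → ℝ) :=
  Submodule.span ℝ {v | ∃ r ∈ N.reactions, v = r.2 - r.1}

/-- The rank `s` of the network. -/
noncomputable def rank : ℕ := Module.finrank ℝ N.stoichSubspace

/-- The deficiency `δ = n - ℓ - s`. -/
noncomputable def deficiency : ℤ :=
  (N.complexes.card : ℤ) - N.numLinkageClasses - N.rank

/-- The map of complexes `Y : ℝ^C → ℝ^S`, sending `ω_y ↦ y`. -/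
noncomputable def mapY : (↥N.complexes → ℝ) →ₗ[ℝ] (S → ℝ) :=
  ∑ y : ↥N.complexes, (LinearMap.proj y).smulRight (y : S → ℝ)

/-- The incidence map `I_a : ℝ^R → ℝ^C`, sending `ω_{y→y'} ↦ ω_{y'} - ω_y`. -/
noncomputable def incidence : (↥N.reactions → ℝ) →ₗ[ℝ] (↥N.complexes → ℝ) :=
  ∑ r : ↥N.reactions,
    (LinearMap.proj r).smulRight
      (Pi.single (⟨r.1.2, N.mem_target r.1 r.2⟩ : ↥N.complexes) 1
        - Pi.single (⟨r.1.1, N.mem_source r.1 r.2⟩ : ↥N.complexes) 1)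

/-- The Laplacian map `A_k x = Σ_{y→y'} k_{y→y'} x_y (ω_{y'} - ω_y)`. -/
noncomputable def laplacian (k : ↥N.reactions → ℝ) :
    (↥N.complexes → ℝ) →ₗ[ℝ] (↥N.complexes → ℝ) :=
  ∑ r : ↥N.reactions, k r •
    ((LinearMap.proj (⟨r.1.1, N.mem_source r.1 r.2⟩ : ↥N.complexes)).smulRight
      (Pi.single (⟨r.1.2, N.mem_target r.1 r.2⟩ : ↥N.complexes) 1
        - Pi.single (⟨r.1.1, N.mem_source r.1 r.2⟩ : ↥N.complexes) 1))

/-- A positive equilibrium of the PL-RDK system with rate constants `k` and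
kinetic-order assignment (T-matrix) `T`. -/
def IsPosEquilibrium (k : ↥N.reactions → ℝ) (T : (S → ℝ) → (S → ℝ)) (c : S → ℝ) : Prop :=
  (∀ i, 0 < c i) ∧
    ∑ r : ↥N.reactions, (k r * ∏ i, (c i) ^ (T r.1.1 i)) • ((r.1.2 : S → ℝ) - r.1.1) = 0

/-- The set of reactant complexes. -/
def reactantSet : Set (S → ℝ) := {y | ∃ y', (y, y') ∈ N.reactions}

/-- The reactant subspace `R = Im Y_res`. -/
def reactantSubspace : Submodule ℝ (S → ℝ) := Submodule.span ℝ N.reactantSet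

/-- The reactant deficiency `δ_ρ = n_r - q`. -/
noncomputable def reactantDeficiency : ℤ :=
  (Nat.card N.reactantSet : ℤ) - Module.finrank ℝ N.reactantSubspace

end CRN
section helpers
set_option linter.unusedSectionVars false

variable {ι M : Type*} [Fintype ι] [DecidableEq ι] [AddCommGroup M] [Module ℝ M]

lemma sum_smulRight_apply (v : ι → M) (x : ι → ℝ) :
    (∑ i : ι, (LinearMap.proj i : (ι → ℝ) →ₗ[ℝ] ℝ).smulRight (v i)) x = ∑ i, x i • v i := by
  simp [LinearMap.sum_apply]

lemma sum_smulRight_single (v : ι → M) (j : ι) :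
    (∑ i : ι, (LinearMap.proj i : (ι → ℝ) →ₗ[ℝ] ℝ).smulRight (v i)) (Pi.single j 1) = v j := by
  rw [sum_smulRight_apply, Finset.sum_eq_single j]
  · simp
  · intro i _ hij
    simp [Pi.single_eq_of_ne hij]
  · simp

lemma range_sum_smulRight (v : ι → M) :
    LinearMap.range (∑ i : ι, (LinearMap.proj i : (ι → ℝ) →ₗ[ℝ] ℝ).smulRight (v i)) =
      Submodule.span ℝ (Set.range v) := by
  apply le_antisymm
  · rintro _ ⟨x, rfl⟩
    rw [sum_smulRight_apply]
    exact Submodule.sum_mem _ fun i _ => Submodule.smul_mem _ _ (Submodule.subset_span ⟨i, rfl⟩)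
  · rw [Submodule.span_le]
    rintro _ ⟨j, rfl⟩
    exact ⟨Pi.single j 1, sum_smulRight_single v j⟩

end helpers

section aux

variable {S : Type*} [Fintype S] (N : CRN S)

namespace CRN

lemma linked_symm {a b : S → ℝ} (h : N.linked a b) : N.linked b a := by
  have : Symmetric (fun a b => (a, b) ∈ N.reactions ∨ (b, a) ∈ N.reactions) :=
    fun _ _ h => h.symm
  exact (@Relation.ReflTransGen.symmetric _ _ ⟨this⟩).symm _ _ h

lemma mem_class_iff {y z w : S → ℝ} (hz : z ∈ {y' | y' ∈ N.complexes ∧ N.linked y y'}) :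
    w ∈ {y' | y' ∈ N.complexes ∧ N.linked y y'} ↔ w ∈ N.complexes ∧ N.linked z w := by
  constructor
  · rintro ⟨hw, hl⟩
    exact ⟨hw, Relation.ReflTransGen.trans (N.linked_symm hz.2) hl⟩
  · rintro ⟨hw, hl⟩
    exact ⟨hw, Relation.ReflTransGen.trans hz.2 hl⟩

lemma class_eq_of_mem {L L' : Set (S → ℝ)} (hL : L ∈ N.linkageClasses)
    (hL' : L' ∈ N.linkageClasses) {z : S → ℝ} (hzL : z ∈ L) (hzL' : z ∈ L') : L = L' := by
  obtain ⟨y, _, rfl⟩ := hL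
  obtain ⟨y', _, rfl⟩ := hL'
  ext w
  rw [N.mem_class_iff hzL, N.mem_class_iff hzL']

lemma mem_of_linked_mem {L : Set (S → ℝ)} (hL : L ∈ N.linkageClasses) {a b : S → ℝ}
    (ha : a ∈ L) (hb : b ∈ N.complexes) (hab : N.linked a b) : b ∈ L := by
  obtain ⟨y, _, rfl⟩ := hL
  exact ⟨hb, Relation.ReflTransGen.trans ha.2 hab⟩

lemma class_nonempty {L : Set (S → ℝ)} (hL : L ∈ N.linkageClasses) :
    ∃ y ∈ N.complexes, y ∈ L := by
  obtain ⟨y, hy, rfl⟩ := hL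
  exact ⟨y, hy, hy, Relation.ReflTransGen.refl⟩

lemma linkageClasses_finite : N.linkageClasses.Finite := by
  apply Set.Finite.subset ((N.complexes : Set (S → ℝ)).toFinite.finite_subsets)
  rintro L ⟨y, _, rfl⟩
  intro w hw
  exact hw.1

lemma reach_mem_complexes {a b : S → ℝ} (ha : a ∈ N.complexes) (h : N.reach a b) :
    b ∈ N.complexes := by
  induction h with
  | refl => exact ha
  | tail _ h ih => exact N.mem_target _ h

lemma isTerminal_of_mem_tslc {L : Set (S → ℝ)} (hL : L ∈ N.tslc) {z : S → ℝ}
    (hz : z ∈ L) : N.IsTerminal z := by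
  obtain ⟨y, hy, rfl⟩ := hL
  obtain ⟨h1, h2⟩ := hz
  refine ⟨N.reach_mem_complexes hy.1 h1, fun y' hy' => ?_⟩
  exact Relation.ReflTransGen.trans (hy.2 y' (Relation.ReflTransGen.trans h1 hy'))  h1

/-- The per-linkage-class coordinate-sum map. -/
noncomputable def sumMap : (↥N.complexes → ℝ) →ₗ[ℝ] (↥N.linkageClasses → ℝ) :=
  LinearMap.pi fun L : ↥N.linkageClasses =>
    ∑ y : ↥N.complexes,
      if (y : S → ℝ) ∈ (L : Set (S → ℝ)) then (LinearMap.proj y : (↥N.complexes → ℝ) →ₗ[ℝ] ℝ)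
      else 0

lemma sumMap_apply (x : ↥N.complexes → ℝ) (L : ↥N.linkageClasses) :
    N.sumMap x L = ∑ y : ↥N.complexes, if (y : S → ℝ) ∈ (L : Set (S → ℝ)) then x y else 0 := by
  simp only [sumMap, LinearMap.pi_apply, LinearMap.sum_apply]
  congr 1
  ext y
  split <;> simp_all

lemma sumMap_single (z : ↥N.complexes) (L : ↥N.linkageClasses) :
    N.sumMap (Pi.single z 1) L = if (z : S → ℝ) ∈ (L : Set (S → ℝ)) then 1 else 0 := by
  rw [sumMap_apply, Finset.sum_eq_single z]
  · simp
  · intro y _ hy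
    simp [Pi.single_eq_of_ne hy]
  · simp

lemma sumMap_surjective : Function.Surjective N.sumMap := by
  haveI : Fintype ↥N.linkageClasses := N.linkageClasses_finite.fintype
  rw [← LinearMap.range_eq_top, ← top_le_iff, ← (Pi.basisFun ℝ ↥N.linkageClasses).span_eq,
    Submodule.span_le]
  rintro _ ⟨L0, rfl⟩
  obtain ⟨y0, hy0c, hy0⟩ := N.class_nonempty L0.2
  refine ⟨Pi.single (⟨y0, hy0c⟩ : ↥N.complexes) 1, ?_⟩
  ext L
  rw [sumMap_single]
  by_cases h : (L : Set (S → ℝ)) = (L0 : Set (S → ℝ))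
  · have : L = L0 := Subtype.ext h
    subst this
    simp [hy0, Pi.basisFun_apply]
  · have : (y0 : S → ℝ) ∉ (L : Set (S → ℝ)) := by
      intro hmem
      exact h (N.class_eq_of_mem L.2 L0.2 hmem hy0)
    have hLL0 : L ≠ L0 := fun e => h (congrArg _ e)
    simp [this, Pi.basisFun_apply, Pi.single_eq_of_ne hLL0]

end CRN

end aux

section aux2

variable {S : Type*} [Fintype S] (N : CRN S)

namespace CRN

lemma mapY_single (z : ↥N.complexes) : N.mapY (Pi.single z 1) = (z : S → ℝ) :=
  sum_smulRight_single (fun y : ↥N.complexes => (y : S → ℝ)) z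

lemma incidence_apply (w : ↥N.reactions → ℝ) :
    N.incidence w = ∑ r : ↥N.reactions,
      w r • (Pi.single (⟨r.1.2, N.mem_target r.1 r.2⟩ : ↥N.complexes) 1
        - Pi.single (⟨r.1.1, N.mem_source r.1 r.2⟩ : ↥N.complexes) 1) :=
  sum_smulRight_apply _ w

lemma laplacian_apply (κ : ↥N.reactions → ℝ) (x : ↥N.complexes → ℝ) :
    N.laplacian κ x = ∑ r : ↥N.reactions,
      (κ r * x (⟨r.1.1, N.mem_source r.1 r.2⟩ : ↥N.complexes)) •
        (Pi.single (⟨r.1.2, N.mem_target r.1 r.2⟩ : ↥N.complexes) 1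
          - Pi.single (⟨r.1.1, N.mem_source r.1 r.2⟩ : ↥N.complexes) 1) := by
  simp [laplacian, LinearMap.sum_apply, smul_smul]

lemma range_laplacian_le (κ : ↥N.reactions → ℝ) :
    LinearMap.range (N.laplacian κ) ≤ LinearMap.range N.incidence := by
  rintro _ ⟨x, rfl⟩
  exact ⟨fun r => κ r * x (⟨r.1.1, N.mem_source r.1 r.2⟩ : ↥N.complexes),
    (N.laplacian_apply κ x ▸ (N.incidence_apply _)).symm ▸ rfl⟩

lemma range_incidence_le_ker_sumMap :
    LinearMap.range N.incidence ≤ LinearMap.ker N.sumMap := by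
  rintro _ ⟨w, rfl⟩
  rw [LinearMap.mem_ker, incidence_apply, map_sum]
  refine Finset.sum_eq_zero fun r _ => ?_
  rw [map_smul, map_sub]
  have key : ∀ L : ↥N.linkageClasses,
      (r.1.2 ∈ (L : Set (S → ℝ))) ↔ (r.1.1 ∈ (L : Set (S → ℝ))) := by
    intro L
    have hlink : N.linked r.1.1 r.1.2 := Relation.ReflTransGen.single (Or.inl r.2)
    constructor
    · intro h
      exact N.mem_of_linked_mem L.2 h (N.mem_source r.1 r.2) (N.linked_symm hlink)
    · intro h
      exact N.mem_of_linked_mem L.2 h (N.mem_target r.1 r.2) hlink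
  have : N.sumMap (Pi.single (⟨r.1.2, N.mem_target r.1 r.2⟩ : ↥N.complexes) 1)
      = N.sumMap (Pi.single (⟨r.1.1, N.mem_source r.1 r.2⟩ : ↥N.complexes) 1) := by
    ext L
    rw [sumMap_single, sumMap_single]
    simp only [key L]
  rw [this, sub_self, smul_zero]

lemma range_Y_incidence :
    LinearMap.range (N.mapY ∘ₗ N.incidence) = N.stoichSubspace := by
  have h1 : N.mapY ∘ₗ N.incidence = ∑ r : ↥N.reactions,
      (LinearMap.proj r : (↥N.reactions → ℝ) →ₗ[ℝ] ℝ).smulRight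
        ((r.1.2 : S → ℝ) - r.1.1) := by
    ext w
    simp only [LinearMap.comp_apply, incidence_apply, map_sum, map_smul, map_sub,
      mapY_single, sum_smulRight_apply]
  rw [h1, range_sum_smulRight]
  unfold stoichSubspace
  congr 1
  ext v
  constructor
  · rintro ⟨r, rfl⟩
    exact ⟨r.1, r.2, rfl⟩
  · rintro ⟨r, hr, rfl⟩
    exact ⟨⟨r, hr⟩, rfl⟩

end CRN

end aux2



set_option synthInstance.maxHeartbeats 1000000 in
set_option maxHeartbeats 1000000 in
/-- For a deficiency-one CRN with a nonterminal complex and `κ > 0` with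
`Σ κ_{y→y'} (y'-y) = 0` (equivalently `1^C ∈ Ker (Y ∘ A_κ)`):
if `b^1, …, b^t` is a basis of `Ker A_κ` whose supports are the terminal strong
linkage classes, then `{1^C, b^1, …, b^t}` is a basis of `Ker (Y ∘ A_κ)`;
in particular `dim Ker (Y ∘ A_κ) = 1 + t`. -/
theorem basis_ker_YAk_of_deficiency_one {S : Type*} [Fintype S] (N : CRN S)
    (hδ : N.deficiency = 1)
    (hnt : ∃ y, N.Nonterminal y)
    (κ : ↥N.reactions → ℝ) (hκpos : ∀ r, 0 < κ r)
    (hκ : ∑ r : ↥N.reactions, κ r • ((r.1.2 : S → ℝ) - r.1.1) = 0)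
    (b : ↥N.tslc → (↥N.complexes → ℝ))
    (hli : LinearIndependent ℝ b)
    (hspan : Submodule.span ℝ (Set.range b) = LinearMap.ker (N.laplacian κ))
    (hsupp : ∀ L : ↥N.tslc, ∀ y : ↥N.complexes,
      b L y ≠ 0 ↔ (y : S → ℝ) ∈ (L : Set (S → ℝ))) :
    LinearIndependent ℝ
      (fun o : Option ↥N.tslc => o.elim (1 : ↥N.complexes → ℝ) b) ∧
    Submodule.span ℝ
      (Set.range (fun o : Option ↥N.tslc => o.elim (1 : ↥N.complexes → ℝ) b)) =
      LinearMap.ker (N.mapY ∘ₗ N.laplacian κ) ∧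
    Module.finrank ℝ ↥(LinearMap.ker (N.mapY ∘ₗ N.laplacian κ)) = 1 + N.numTSLC := by
  classical
  haveI : Finite ↥N.tslc := hli.finite
  haveI : Fintype ↥N.tslc := Fintype.ofFinite _
  haveI : Fintype ↥N.linkageClasses := N.linkageClasses_finite.fintype
  set AK := N.laplacian κ with hAKdef
  set W := LinearMap.ker (N.mapY ∘ₗ AK) with hWdef
  set v : Option ↥N.tslc → (↥N.complexes → ℝ) := fun o => o.elim 1 b with hvdef
  -- `1 ∈ W`
  have h1W : (1 : ↥N.complexes → ℝ) ∈ W := by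
    rw [hWdef, LinearMap.mem_ker, LinearMap.comp_apply, hAKdef, N.laplacian_apply, map_sum]
    simp only [map_smul, map_sub, N.mapY_single, Pi.one_apply, mul_one]
    exact hκ
  -- the nonterminal complex is in no terminal strong linkage class
  obtain ⟨y0, hy0c, hy0nt⟩ := hnt
  have hbz : ∀ L : ↥N.tslc, b L ⟨y0, hy0c⟩ = 0 := by
    intro L
    by_contra h
    exact hy0nt (N.isTerminal_of_mem_tslc L.2 ((hsupp L ⟨y0, hy0c⟩).1 h))
  have h1span : (1 : ↥N.complexes → ℝ) ∉ Submodule.span ℝ (Set.range b) := by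
    intro hmem
    rw [Submodule.mem_span_range_iff_exists_fun] at hmem
    obtain ⟨c, hc⟩ := hmem
    have h2 := congrFun hc ⟨y0, hy0c⟩
    rw [Finset.sum_apply] at h2
    simp [hbz] at h2
  -- linear independence
  have hIndep : LinearIndependent ℝ v := by
    rw [linearIndependent_option]
    exact ⟨hli, h1span⟩
  -- `ker AK ≤ W`
  have hVW : LinearMap.ker AK ≤ W := by
    intro x hx
    rw [hWdef, LinearMap.mem_ker, LinearMap.comp_apply, LinearMap.mem_ker.1 hx, map_zero]
  -- span (range v) ≤ W
  have hspanW : Submodule.span ℝ (Set.range v) ≤ W := by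
    rw [Submodule.span_le]
    rintro _ ⟨o, rfl⟩
    cases o with
    | none => exact h1W
    | some L => exact hVW (hspan ▸ Submodule.subset_span (Set.mem_range_self L))
  -- dimension of `ker AK` is `t`
  have hVt : Module.finrank ℝ ↥(LinearMap.ker AK) = N.numTSLC := by
    rw [← hspan, finrank_span_eq_card hli, CRN.numTSLC, Nat.card_eq_fintype_card]
  -- rank-nullity for sumMap : finrank U + ℓ = n
  have hsurj : LinearMap.range N.sumMap = ⊤ := LinearMap.range_eq_top.2 N.sumMap_surjective
  have hrank1 := LinearMap.finrank_range_add_finrank_ker N.sumMap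
  rw [hsurj, finrank_top, Module.finrank_fintype_fun_eq_card,
    Module.finrank_fintype_fun_eq_card, Fintype.card_coe] at hrank1
  -- hrank1 : card LC + finrank (ker sumMap) = N.complexes.card
  -- rank-nullity for Y restricted to range I
  set Q := LinearMap.ker N.mapY ⊓ LinearMap.range N.incidence with hQdef
  have hrank2 := LinearMap.finrank_range_add_finrank_ker
    (N.mapY.domRestrict (LinearMap.range N.incidence))
  have hr2 : LinearMap.range (N.mapY.domRestrict (LinearMap.range N.incidence)) =
      N.stoichSubspace := by
    rw [LinearMap.range_domRestrict, ← LinearMap.range_comp, N.range_Y_incidence]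
  have hk2 : Module.finrank ℝ
      ↥(LinearMap.ker (N.mapY.domRestrict (LinearMap.range N.incidence))) =
      Module.finrank ℝ ↥Q := by
    rw [LinearMap.ker_domRestrict]
    have hcomap : (LinearMap.ker N.mapY).comap (LinearMap.range N.incidence).subtype =
        Q.comap (LinearMap.range N.incidence).subtype := by
      ext x
      simp [hQdef, x.2]
    rw [hcomap]
    exact (Submodule.comapSubtypeEquivOfLe (inf_le_right : Q ≤ LinearMap.range N.incidence)).finrank_eq
  rw [hr2, hk2] at hrank2
  -- hrank2 : s + finrank Q = finrank (range I)
  have hIleU : Module.finrank ℝ ↥(LinearMap.range N.incidence) ≤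
      Module.finrank ℝ ↥(LinearMap.ker N.sumMap) :=
    Submodule.finrank_mono N.range_incidence_le_ker_sumMap
  -- deficiency hypothesis : n = 1 + ℓ + s
  have hdef : (N.complexes.card : ℤ) = 1 + N.numLinkageClasses + N.rank := by
    unfold CRN.deficiency at hδ
    omega
  have hell : N.numLinkageClasses = Fintype.card ↥N.linkageClasses := by
    rw [CRN.numLinkageClasses, Nat.card_eq_fintype_card]
  have hQ1 : Module.finrank ℝ ↥Q ≤ 1 := by
    have : N.rank = Module.finrank ℝ ↥N.stoichSubspace := rfl
    omega
  -- rank-nullity for AK restricted to W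
  have hrank3 := LinearMap.finrank_range_add_finrank_ker (AK.domRestrict W)
  have hk3 : Module.finrank ℝ ↥(LinearMap.ker (AK.domRestrict W)) = N.numTSLC := by
    rw [LinearMap.ker_domRestrict]
    rw [(Submodule.comapSubtypeEquivOfLe hVW).finrank_eq]
    exact hVt
  have hr3 : Module.finrank ℝ ↥(LinearMap.range (AK.domRestrict W)) ≤
      Module.finrank ℝ ↥Q := by
    apply Submodule.finrank_mono
    rw [LinearMap.range_domRestrict]
    rintro _ ⟨x, hxW, rfl⟩
    refine ⟨?_, N.range_laplacian_le κ ⟨x, rfl⟩⟩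
    exact LinearMap.mem_ker.1 hxW
  rw [hk3] at hrank3
  -- upper bound : finrank W ≤ 1 + t
  have hupper : Module.finrank ℝ ↥W ≤ 1 + N.numTSLC := by omega
  -- lower bound via the span
  have hspanrank : Module.finrank ℝ ↥(Submodule.span ℝ (Set.range v)) = 1 + N.numTSLC := by
    rw [finrank_span_eq_card hIndep, Fintype.card_option, CRN.numTSLC, Nat.card_eq_fintype_card]
    omega
  have hlower : 1 + N.numTSLC ≤ Module.finrank ℝ ↥W := by
    rw [← hspanrank]
    exact Submodule.finrank_mono hspanW
  have hfr : Module.finrank ℝ ↥W = 1 + N.numTSLC := le_antisymm hupper hlower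
  refine ⟨hIndep, ?_, hfr⟩
  exact Submodule.eq_of_le_of_finrank_eq hspanW (by rw [hspanrank, hfr])
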